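/- Let T be an observation tree with nonempty basis S and frontier F, and assume the output alphabet O is nonempty. If no state of F is isolated (i.e., every frontier state fails to be apart from at least one basis state), then there exists a hypothesis H for T. -/

import Mathlib

open scoped Classical

/-- A Mealy machine over input alphabet `I` and output alphabet `O`, with state
type `Q`, initial state `q0`, and a partial combined output/transition map
`trans : Q × I ⇀ O × Q` (so the output and transition functions are defined on
exactly the same pairs). -/
structure Mealy (Q I O : Type) where
  q0 : Q
  trans : Q → I → Option (O × Q)

namespace Mealy

variable {Q Q' I O : Type}

/-- Extension of the combined output/transition map to input words. -/
def stepStar (M : Mealy Q I O) : Q → List I → Option (List O × Q)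
  | q, [] => some ([], q)
  | q, i :: σ => (M.trans q i).bind fun p =>
      (stepStar M p.2 σ).map fun r => (p.1 :: r.1, r.2)

/-- `λ(q, σ)`: the output word produced from `q` on input word `σ` (if defined);
this is also the semantics `⟦q⟧ : I* ⇀ O*` of the state `q`. -/
def outStar (M : Mealy Q I O) (q : Q) (σ : List I) : Option (List O) :=
  (M.stepStar q σ).map Prod.fst

/-- `δ(q, σ)`: the state reached from `q` on input word `σ` (if defined). -/
def delStar (M : Mealy Q I O) (q : Q) (σ : List I) : Option Q :=
  (M.stepStar q σ).map Prod.snd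

/-- `σ ⊢ q # p`: the word `σ` witnesses apartness of `q` and `p`. -/
def ApartW (M : Mealy Q I O) (σ : List I) (q p : Q) : Prop :=
  (M.outStar q σ).isSome ∧ (M.outStar p σ).isSome ∧ M.outStar q σ ≠ M.outStar p σ

/-- `q # p`: states `q` and `p` are apart. -/
def Apart (M : Mealy Q I O) (q p : Q) : Prop := ∃ σ, M.ApartW σ q p

/-- `q ≈ r`: states `q` (of `M`) and `r` (of `N`) are equivalent, i.e. have equal
semantics `⟦q⟧ = ⟦r⟧` as partial maps `I* ⇀ O*`. -/
def StateEquiv (M : Mealy Q I O) (N : Mealy Q' I O) (q : Q) (r : Q') : Prop :=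
  ∀ σ, M.outStar q σ = N.outStar r σ

/-- A functional simulation `f : M → N`. -/
def FunSim (M : Mealy Q I O) (N : Mealy Q' I O) (f : Q → Q') : Prop :=
  f M.q0 = N.q0 ∧
    ∀ q i o q'', M.trans q i = some (o, q'') → N.trans (f q) i = some (o, f q'')

/-- A Mealy machine is complete if its transition map is total. -/
def Complete (M : Mealy Q I O) : Prop := ∀ q i, (M.trans q i).isSome

/-- A Mealy machine is a tree if every state is reached from the root by a
unique input word (its access sequence). -/
def IsTree (M : Mealy Q I O) : Prop :=
  ∀ q : Q, ∃! σ : List I, M.delStar M.q0 σ = some q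

/-- `S` is a basis of the observation tree `T`: a subtree containing the root
whose states are pairwise apart. -/
structure IsBasis (T : Mealy Q I O) (S : Set Q) : Prop where
  root_mem : T.q0 ∈ S
  subtree_closed : ∀ q i o q', T.trans q i = some (o, q') → q' ∈ S → q ∈ S
  pairwise_apart : ∀ p ∈ S, ∀ q ∈ S, p ≠ q → T.Apart p q

/-- The frontier `F`: immediate non-basis successors of basis states. -/
def frontier (T : Mealy Q I O) (S : Set Q) : Set Q :=
  {q' | q' ∉ S ∧ ∃ q ∈ S, ∃ i o, T.trans q i = some (o, q')}

/-- The basis `S` is complete: each basis state has a transition for each input. -/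
def BasisComplete (T : Mealy Q I O) (S : Set Q) : Prop :=
  ∀ q ∈ S, ∀ i : I, (T.trans q i).isSome

/-- A Mealy machine `H` with state set `S` contains the basis `S` of `T`:
`δ^H(q0^H, access(q)) = q` for every `q ∈ S`. -/
def ContainsBasis (T : Mealy Q I O) (S : Set Q) (H : Mealy ↥S I O) : Prop :=
  ∀ (q : ↥S) (σ : List I), T.delStar T.q0 σ = some (q : Q) → H.delStar H.q0 σ = some q

/-- `H` is a hypothesis for the observation tree `T` with basis `S`. -/
def IsHypothesis (T : Mealy Q I O) (S : Set Q) (H : Mealy ↥S I O) : Prop :=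
  H.Complete ∧ ContainsBasis T S H ∧
    ∀ (q : ↥S) (i : I) (o' : O) (p' : ↥S), H.trans q i = some (o', p') →
      ∀ (o : O) (p : Q), T.trans (q : Q) i = some (o, p) → o = o' ∧ ¬ T.Apart p (p' : Q)

/-- The equivalence `≈` on the states of a single machine, as a setoid. -/
def equivSetoid (M : Mealy Q I O) : Setoid Q :=
  ⟨fun q r => M.StateEquiv M q r,
   ⟨fun _ _ => rfl, fun h σ => (h σ).symm, fun h1 h2 σ => (h1 σ).trans (h2 σ)⟩⟩

/-- `R` is a bisimulation between `M` and `N`. -/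
def IsBisimulation (M : Mealy Q I O) (N : Mealy Q' I O) (R : Q → Q' → Prop) : Prop :=
  R M.q0 N.q0 ∧
    ∀ q r, R q r → ∀ i o q', M.trans q i = some (o, q') →
      ∃ r', N.trans r i = some (o, r') ∧ R q' r'

end Mealy

namespace Mealy

theorem apart_irrefl {Q I O : Type} (M : Mealy Q I O) (q : Q) : ¬ M.Apart q q := by
  rintro ⟨σ, _, _, hne⟩; exact hne rfl

/-- Choose a basis representative for a state `p`. -/
noncomputable def pickState {Q I O : Type} (T : Mealy Q I O) (S : Set Q)
    (hroot : T.q0 ∈ S) (p : Q) : ↥S :=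
  if hp : p ∈ S then ⟨p, hp⟩
  else if hf : ∃ b ∈ S, ¬ T.Apart p b then ⟨hf.choose, hf.choose_spec.1⟩
  else ⟨T.q0, hroot⟩

theorem pickState_mem {Q I O : Type} (T : Mealy Q I O) (S : Set Q)
    (hroot : T.q0 ∈ S) (p : Q) (hp : p ∈ S) :
    pickState T S hroot p = ⟨p, hp⟩ := by
  simp [pickState, hp]

theorem pickState_not_apart {Q I O : Type} (T : Mealy Q I O) (S : Set Q)
    (hroot : T.q0 ∈ S) (p : Q) (h : p ∈ S ∨ ∃ b ∈ S, ¬ T.Apart p b) :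
    ¬ T.Apart p (pickState T S hroot p : Q) := by
  unfold pickState
  by_cases hp : p ∈ S
  · simp only [dif_pos hp]; exact apart_irrefl T p
  · rcases h with h | hf
    · exact absurd h hp
    · simp only [dif_neg hp, dif_pos hf]
      exact hf.choose_spec.2

/-- The hypothesis machine. -/
noncomputable def hyp {Q I O : Type} [Nonempty O] (T : Mealy Q I O) (S : Set Q)
    (hroot : T.q0 ∈ S) : Mealy ↥S I O where
  q0 := ⟨T.q0, hroot⟩
  trans q i :=
    match T.trans (q : Q) i with
    | none => some (Classical.arbitrary O, ⟨T.q0, hroot⟩)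
    | some (o, p) => some (o, pickState T S hroot p)

theorem hyp_trans_some {Q I O : Type} [Nonempty O] (T : Mealy Q I O) (S : Set Q)
    (hroot : T.q0 ∈ S) (q : ↥S) (i : I) (o : O) (p : Q)
    (h : T.trans (q : Q) i = some (o, p)) :
    (hyp T S hroot).trans q i = some (o, pickState T S hroot p) := by
  simp [hyp, h]

/-- Backward closure of the basis along paths. -/
theorem basis_back {Q I O : Type} (T : Mealy Q I O) (S : Set Q) (hS : T.IsBasis S) :
    ∀ (σ : List I) (r : Q) (ω : List O) (q : Q),
      T.stepStar r σ = some (ω, q) → q ∈ S → r ∈ S := by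
  intro σ
  induction σ with
  | nil => intro r ω q h hq; simp [stepStar] at h; rw [h.2]; exact hq
  | cons i σ ih =>
    intro r ω q h hq
    simp only [stepStar, Option.bind_eq_some_iff] at h
    obtain ⟨⟨o, r'⟩, htr, hrest⟩ := h
    simp only [Option.map_eq_some_iff] at hrest
    obtain ⟨⟨ω', q'⟩, hstep, heq⟩ := hrest
    cases heq
    exact hS.subtree_closed r i o r' htr (ih r' ω' q' hstep hq)

theorem hyp_stepStar {Q I O : Type} [Nonempty O] (T : Mealy Q I O) (S : Set Q)
    (hS : T.IsBasis S) :
    ∀ (σ : List I) (p : Q) (hp : p ∈ S) (ω : List O) (q : Q) (hq : q ∈ S),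
      T.stepStar p σ = some (ω, q) →
      (hyp T S hS.root_mem).stepStar ⟨p, hp⟩ σ = some (ω, ⟨q, hq⟩) := by
  intro σ
  induction σ with
  | nil =>
    intro p hp ω q hq h
    simp only [stepStar, Option.some.injEq, Prod.mk.injEq] at h ⊢
    exact ⟨h.1, Subtype.ext h.2⟩
  | cons i σ ih =>
    intro p hp ω q hq h
    simp only [stepStar, Option.bind_eq_some_iff] at h
    obtain ⟨⟨o, r⟩, htr, hrest⟩ := h
    simp only [Option.map_eq_some_iff] at hrest
    obtain ⟨⟨ω', q'⟩, hstep, heq⟩ := hrest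
    cases heq
    have hr : r ∈ S := basis_back T S hS σ r ω' q' hstep hq
    have := hyp_trans_some T S hS.root_mem ⟨p, hp⟩ i o r htr
    rw [pickState_mem T S hS.root_mem r hr] at this
    simp only [stepStar, this, Option.bind_eq_some_iff]
    exact ⟨(o, ⟨r, hr⟩), rfl, by
      simp only [Option.map_eq_some_iff]
      exact ⟨(ω', ⟨q', hq⟩), ih r hr ω' q' hq hstep, rfl⟩⟩

end Mealy

/-- For an observation tree `T` with (nonempty) basis `S` and
frontier `F`, with `O` nonempty, if no frontier state is isolated (each fails
to be apart from some basis state) then a hypothesis `H` for `T` exists. -/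
theorem statement_4 {Q I O : Type} [Fintype I] [Fintype Q] [Nonempty O]
    (T : Mealy Q I O) (htree : T.IsTree) (S : Set Q) (hS : T.IsBasis S)
    (hnoiso : ∀ p ∈ T.frontier S, ∃ b ∈ S, ¬ T.Apart p b) :
    ∃ H : Mealy ↥S I O, T.IsHypothesis S H := by
  classical
  refine ⟨Mealy.hyp T S hS.root_mem, ?_, ?_, ?_⟩
  · -- Complete
    intro q i
    cases h : T.trans (q : Q) i with
    | none => simp [Mealy.hyp, h]
    | some op => simp [Mealy.hyp, h]
  · -- ContainsBasis
    intro q σ hdel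
    simp only [Mealy.delStar, Option.map_eq_some_iff] at hdel
    obtain ⟨⟨ω, q'⟩, hstep, heq⟩ := hdel
    simp only at heq; subst heq
    have := Mealy.hyp_stepStar T S hS σ T.q0 hS.root_mem ω (q : Q) q.2 hstep
    simp only [Mealy.delStar, Mealy.hyp] at this ⊢
    rw [this]
    simp
  · -- output/apartness condition
    intro q i o' p' htr o p htT
    have h := Mealy.hyp_trans_some T S hS.root_mem q i o p htT
    rw [htr] at h
    have h2 := Option.some.inj h
    have ho : o' = o := congrArg Prod.fst h2
    have hp : p' = Mealy.pickState T S hS.root_mem p := congrArg Prod.snd h2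
    refine ⟨ho.symm, ?_⟩
    rw [hp]
    apply Mealy.pickState_not_apart T S hS.root_mem p
    by_cases hpS : p ∈ S
    · exact Or.inl hpS
    · exact Or.inr (hnoiso p ⟨hpS, ⟨(q : Q), q.2, i, o, htT⟩⟩)
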